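/- Let r ≥ 1 and let A, B : U → GL_r(ℂ) be differentiable maps on an open set U ⊆ ℝ² with coordinates (u₁, u₂), and set J := B⁻¹A⁻¹BA. Then, pointwise on U: −Tr( A⁻¹δA ∧ δ(BJ)·J⁻¹B⁻¹ ) − Tr( (A⁻¹B⁻¹δ(BA) − A⁻¹δA) ∧ δ(A⁻¹J)·J⁻¹A ) = Tr( B⁻¹δB ∧ δA·A⁻¹ − A⁻¹δA ∧ δB·B⁻¹ + δJ·J⁻¹ ∧ B⁻¹A⁻¹δ(AB) ). (This identity — the computation (ct2)–(ct4a) of the paper — evaluates the sum of the contributions I₁ and I₂ of the a- and b-segments of the loop aba⁻¹b⁻¹ to the integral of Ω₀, and yields the two-form χ(A, B) of formula (x) expressing the symplectic structure in terms of the monodromy matrices on a once-punctured elliptic curve.) -/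

import Mathlib

/-- Partial derivative in the first parameter `u₁` of a matrix-valued map on `ℝ²`,
computed entrywise. -/
noncomputable def mpd1 {r : ℕ} (X : ℝ × ℝ → Matrix (Fin r) (Fin r) ℂ) (u : ℝ × ℝ) :
    Matrix (Fin r) (Fin r) ℂ :=
  Matrix.of fun i j => deriv (fun s => X (s, u.2) i j) u.1

/-- Partial derivative in the second parameter `u₂` of a matrix-valued map on `ℝ²`,
computed entrywise. -/
noncomputable def mpd2 {r : ℕ} (X : ℝ × ℝ → Matrix (Fin r) (Fin r) ℂ) (u : ℝ × ℝ) :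
    Matrix (Fin r) (Fin r) ℂ :=
  Matrix.of fun i j => deriv (fun s => X (u.1, s) i j) u.2

/-- The scalar `Tr(α ∧ β) = Tr(α₁β₂ − α₂β₁)` for matrix-valued 1-forms
`α = (α₁, α₂)`, `β = (β₁, β₂)` on `ℝ²`. -/
noncomputable def wedgeTr {r : ℕ} (α₁ α₂ β₁ β₂ : Matrix (Fin r) (Fin r) ℂ) : ℂ :=
  (α₁ * β₂ - α₂ * β₁).trace

/-- The monodromy `J = B⁻¹A⁻¹BA` around the puncture. -/
noncomputable def commJ {r : ℕ} (A B : ℝ × ℝ → Matrix (Fin r) (Fin r) ℂ)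
    (v : ℝ × ℝ) : Matrix (Fin r) (Fin r) ℂ :=
  (B v)⁻¹ * (A v)⁻¹ * B v * A v

set_option maxHeartbeats 2000000


/-- One-variable entrywise matrix derivative. -/
noncomputable def md (g : ℝ → Matrix (Fin r) (Fin r) ℂ) (t : ℝ) :
    Matrix (Fin r) (Fin r) ℂ :=
  Matrix.of fun i j => deriv (fun s => g s i j) t

/-- Entrywise differentiability at a point. -/
def EDiff (g : ℝ → Matrix (Fin r) (Fin r) ℂ) (t : ℝ) : Prop :=
  ∀ i j, DifferentiableAt ℝ (fun s => g s i j) t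

lemma EDiff.mul {g h : ℝ → Matrix (Fin r) (Fin r) ℂ} {t : ℝ}
    (hg : EDiff g t) (hh : EDiff h t) : EDiff (fun s => g s * h s) t := by
  intro i j
  have : (fun s => (g s * h s) i j) = fun s => ∑ k, g s i k * h s k j := by
    funext s; simp [Matrix.mul_apply]
  rw [this]
  exact DifferentiableAt.fun_sum fun k _ => (hg i k).mul (hh k j)

lemma md_mul {g h : ℝ → Matrix (Fin r) (Fin r) ℂ} {t : ℝ}
    (hg : EDiff g t) (hh : EDiff h t) :
    md (fun s => g s * h s) t = md g t * h t + g t * md h t := by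
  ext i j
  have h1 : (fun s => (g s * h s) i j) = fun s => ∑ k, g s i k * h s k j := by
    funext s; simp [Matrix.mul_apply]
  simp only [md, Matrix.of_apply, Matrix.add_apply, Matrix.mul_apply, h1]
  rw [deriv_fun_sum (fun k _ => ((hg i k).fun_mul (hh k j)))]
  rw [← Finset.sum_add_distrib]
  congr 1; funext k
  rw [deriv_fun_mul (hg i k) (hh k j)]

lemma ediff_det {g : ℝ → Matrix (Fin r) (Fin r) ℂ} {t : ℝ} (hg : EDiff g t) :
    DifferentiableAt ℝ (fun s => (g s).det) t := by
  have : (fun s => (g s).det) =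
      fun s => ∑ σ : Equiv.Perm (Fin r), (Equiv.Perm.sign σ : ℤ) * ∏ i, g s (σ i) i := by
    funext s; rw [Matrix.det_apply']
  rw [this]
  exact DifferentiableAt.fun_sum fun σ _ =>
    (differentiableAt_const _).mul (DifferentiableAt.fun_finsetProd fun i _ => hg (σ i) i)

lemma EDiff.inv {g : ℝ → Matrix (Fin r) (Fin r) ℂ} {t : ℝ}
    (hg : EDiff g t) (hu : IsUnit (g t)) : EDiff (fun s => (g s)⁻¹) t := by
  intro i j
  have h1 : (fun s => (g s)⁻¹ i j) =
      fun s => ((g s).det)⁻¹ * Matrix.adjugate (g s) i j := by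
    funext s
    rw [Matrix.inv_def, Matrix.smul_apply, Ring.inverse_eq_inv', smul_eq_mul]
  rw [h1]
  have hdet : DifferentiableAt ℝ (fun s => (g s).det) t := ediff_det hg
  have hne : (g t).det ≠ 0 := by
    have := (Matrix.isUnit_iff_isUnit_det _).mp hu
    exact this.ne_zero
  have hadj : DifferentiableAt ℝ (fun s => Matrix.adjugate (g s) i j) t := by
    have h2 : (fun s => Matrix.adjugate (g s) i j) =
        fun s => ((g s).updateRow j (Pi.single i 1)).det := by
      funext s; rw [Matrix.adjugate_apply]
    rw [h2]
    apply ediff_det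
    intro i' j'
    by_cases h : i' = j
    · subst h; simp only [Matrix.updateRow_self]
      exact differentiableAt_const _
    · simp only [Matrix.updateRow_ne h]
      exact hg i' j'
  exact (hdet.inv hne).mul hadj

lemma md_const_one {t : ℝ} :
    md (fun _ : ℝ => (1 : Matrix (Fin r) (Fin r) ℂ)) t = 0 := by
  ext i j; simp [md]

lemma md_congr {g h : ℝ → Matrix (Fin r) (Fin r) ℂ} {t : ℝ}
    (he : g =ᶠ[nhds t] h) : md g t = md h t := by
  ext i j
  simp only [md, Matrix.of_apply]
  apply Filter.EventuallyEq.deriv_eq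
  exact he.mono fun s hs => by dsimp only; rw [hs]

lemma md_inv {g : ℝ → Matrix (Fin r) (Fin r) ℂ} {t : ℝ}
    (hg : EDiff g t) (hu : ∀ᶠ s in nhds t, IsUnit (g s)) :
    md (fun s => (g s)⁻¹) t = -((g t)⁻¹ * md g t * (g t)⁻¹) := by
  have hut : IsUnit (g t) := hu.self_of_nhds
  have hdet : IsUnit (g t).det := (Matrix.isUnit_iff_isUnit_det _).mp hut
  have hinv : EDiff (fun s => (g s)⁻¹) t := hg.inv hut
  have h0 : md (fun s => g s * (g s)⁻¹) t = 0 := by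
    rw [md_congr (h := fun _ => 1)]
    · exact md_const_one
    · exact hu.mono fun s hs =>
        Matrix.mul_nonsing_inv _ ((Matrix.isUnit_iff_isUnit_det _).mp hs)
  have h1 := md_mul hg hinv
  rw [h0] at h1
  have h2 : g t * md (fun s => (g s)⁻¹) t = -(md g t * (g t)⁻¹) :=
    eq_neg_of_add_eq_zero_right h1.symm
  have h3 := congrArg (fun X => (g t)⁻¹ * X) h2
  rw [← Matrix.mul_assoc, Matrix.nonsing_inv_mul _ hdet, Matrix.one_mul] at h3
  rw [h3]
  rw [Matrix.mul_neg, Matrix.mul_assoc]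

lemma md_package {r : ℕ} (P Q : ℝ → Matrix (Fin r) (Fin r) ℂ) (t : ℝ)
    (hP : EDiff P t) (hQ : EDiff Q t)
    (huP : ∀ᶠ s in nhds t, IsUnit (P s)) (huQ : ∀ᶠ s in nhds t, IsUnit (Q s)) :
    md (fun s => (Q s)⁻¹ * (P s)⁻¹ * Q s * P s) t = -((Q t)⁻¹ * md Q t * (Q t)⁻¹ * (P t)⁻¹ * Q t * P t) - (Q t)⁻¹ * (P t)⁻¹ * md P t * (P t)⁻¹ * Q t * P t + (Q t)⁻¹ * (P t)⁻¹ * md Q t * P t + (Q t)⁻¹ * (P t)⁻¹ * Q t * md P t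
    ∧ md (fun s => Q s * ((Q s)⁻¹ * (P s)⁻¹ * Q s * P s)) t
        = md Q t * ((Q t)⁻¹ * (P t)⁻¹ * Q t * P t) + Q t * (-((Q t)⁻¹ * md Q t * (Q t)⁻¹ * (P t)⁻¹ * Q t * P t) - (Q t)⁻¹ * (P t)⁻¹ * md P t * (P t)⁻¹ * Q t * P t + (Q t)⁻¹ * (P t)⁻¹ * md Q t * P t + (Q t)⁻¹ * (P t)⁻¹ * Q t * md P t)
    ∧ md (fun s => (P s)⁻¹ * ((Q s)⁻¹ * (P s)⁻¹ * Q s * P s)) t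
        = -((P t)⁻¹ * md P t * (P t)⁻¹) * ((Q t)⁻¹ * (P t)⁻¹ * Q t * P t) + (P t)⁻¹ * (-((Q t)⁻¹ * md Q t * (Q t)⁻¹ * (P t)⁻¹ * Q t * P t) - (Q t)⁻¹ * (P t)⁻¹ * md P t * (P t)⁻¹ * Q t * P t + (Q t)⁻¹ * (P t)⁻¹ * md Q t * P t + (Q t)⁻¹ * (P t)⁻¹ * Q t * md P t)
    ∧ md (fun s => Q s * P s) t = md Q t * P t + Q t * md P t
    ∧ md (fun s => P s * Q s) t = md P t * Q t + P t * md Q t := by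
  have hP' : EDiff (fun s => (P s)⁻¹) t := hP.inv huP.self_of_nhds
  have hQ' : EDiff (fun s => (Q s)⁻¹) t := hQ.inv huQ.self_of_nhds
  have h2 : EDiff (fun s => (Q s)⁻¹ * (P s)⁻¹) t := hQ'.mul hP'
  have h3 : EDiff (fun s => (Q s)⁻¹ * (P s)⁻¹ * Q s) t := h2.mul hQ
  have h4 : EDiff (fun s => (Q s)⁻¹ * (P s)⁻¹ * Q s * P s) t := h3.mul hP
  have hiP : md (fun s => (P s)⁻¹) t = -((P t)⁻¹ * md P t * (P t)⁻¹) := md_inv hP huP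
  have hiQ : md (fun s => (Q s)⁻¹) t = -((Q t)⁻¹ * md Q t * (Q t)⁻¹) := md_inv hQ huQ
  have hJ : md (fun s => (Q s)⁻¹ * (P s)⁻¹ * Q s * P s) t = -((Q t)⁻¹ * md Q t * (Q t)⁻¹ * (P t)⁻¹ * Q t * P t) - (Q t)⁻¹ * (P t)⁻¹ * md P t * (P t)⁻¹ * Q t * P t + (Q t)⁻¹ * (P t)⁻¹ * md Q t * P t + (Q t)⁻¹ * (P t)⁻¹ * Q t * md P t := by
    rw [md_mul h3 hP, md_mul h2 hQ, md_mul hQ' hP', hiP, hiQ]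
    noncomm_ring
  refine ⟨hJ, ?_, ?_, md_mul hQ hP, md_mul hP hQ⟩
  · rw [md_mul hQ h4, hJ]
  · rw [md_mul hP' h4, hJ, hiP]

lemma core_alg {r : ℕ} (A B A' B' a1 a2 b1 b2 : Matrix (Fin r) (Fin r) ℂ)
    (hAA' : A * A' = 1) (hA'A : A' * A = 1) (hBB' : B * B' = 1) (hB'B : B' * B = 1) :
    -(wedgeTr
          (A' * a1)
          (A' * a2)
          ((b1 * (B' * A' * B * A) + B * (-(B' * b1 * B' * A' * B * A) - B' * A' * a1 * A' * B * A + B' * A' * b1 * A + B' * A' * B * a1)) * (A' * (B' * (A * B)) * B'))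
          ((b2 * (B' * A' * B * A) + B * (-(B' * b2 * B' * A' * B * A) - B' * A' * a2 * A' * B * A + B' * A' * b2 * A + B' * A' * B * a2)) * (A' * (B' * (A * B)) * B')))
      - (wedgeTr
          (A' * B' * (b1 * A + B * a1) - A' * a1)
          (A' * B' * (b2 * A + B * a2) - A' * a2)
          ((-(A' * a1 * A') * (B' * A' * B * A) + A' * (-(B' * b1 * B' * A' * B * A) - B' * A' * a1 * A' * B * A + B' * A' * b1 * A + B' * A' * B * a1)) * (A' * (B' * (A * B)) * A))
          ((-(A' * a2 * A') * (B' * A' * B * A) + A' * (-(B' * b2 * B' * A' * B * A) - B' * A' * a2 * A' * B * A + B' * A' * b2 * A + B' * A' * B * a2)) * (A' * (B' * (A * B)) * A)))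
      =
      wedgeTr
        (B' * b1) (B' * b2)
        (a1 * A') (a2 * A')
      - wedgeTr
          (A' * a1) (A' * a2)
          (b1 * B') (b2 * B')
      + wedgeTr
          ((-(B' * b1 * B' * A' * B * A) - B' * A' * a1 * A' * B * A + B' * A' * b1 * A + B' * A' * B * a1) * (A' * (B' * (A * B))))
          ((-(B' * b2 * B' * A' * B * A) - B' * A' * a2 * A' * B * A + B' * A' * b2 * A + B' * A' * B * a2) * (A' * (B' * (A * B))))
          (B' * A' * (a1 * B + A * b1))
          (B' * A' * (a2 * B + A * b2)) := by
  have cA : ∀ X : Matrix (Fin r) (Fin r) ℂ, A * (A' * X) = X := fun X => by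
    rw [← Matrix.mul_assoc, hAA', Matrix.one_mul]
  have cA' : ∀ X : Matrix (Fin r) (Fin r) ℂ, A' * (A * X) = X := fun X => by
    rw [← Matrix.mul_assoc, hA'A, Matrix.one_mul]
  have cB : ∀ X : Matrix (Fin r) (Fin r) ℂ, B * (B' * X) = X := fun X => by
    rw [← Matrix.mul_assoc, hBB', Matrix.one_mul]
  have cB' : ∀ X : Matrix (Fin r) (Fin r) ℂ, B' * (B * X) = X := fun X => by
    rw [← Matrix.mul_assoc, hB'B, Matrix.one_mul]
  simp only [wedgeTr, sub_eq_add_neg, neg_add, neg_neg, Matrix.mul_add, Matrix.add_mul,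
    Matrix.mul_neg, Matrix.neg_mul, Matrix.mul_assoc, Matrix.mul_one, Matrix.one_mul,
    hAA', hA'A, hBB', hB'B, cA, cA', cB, cB',
    Matrix.trace_add, Matrix.trace_neg]
  have hw1 : (A' * (a1 * (A' * (B' * (b2 * (A)))))).trace = (A' * (B' * (b2 * (a1)))).trace := by
    have h := Matrix.trace_mul_comm (A' * (a1)) (A' * (B' * (b2 * (A))))
    simp only [Matrix.mul_assoc, hAA', hA'A, hBB', hB'B, cA, cA', cB, cB',
      Matrix.mul_one, Matrix.one_mul] at h
    exact h
  have hw2 : (B' * (b2 * (a1 * (A')))).trace = (A' * (B' * (b2 * (a1)))).trace := by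
    have h := Matrix.trace_mul_comm (B' * (b2 * (a1))) (A')
    simp only [Matrix.mul_assoc, hAA', hA'A, hBB', hB'B, cA, cA', cB, cB',
      Matrix.mul_one, Matrix.one_mul] at h
    exact h
  have hw3 : (B' * (A' * (b1 * (B' * (a2 * (B)))))).trace = (A' * (b1 * (B' * (a2)))).trace := by
    have h := Matrix.trace_mul_comm (B') (A' * (b1 * (B' * (a2 * (B)))))
    simp only [Matrix.mul_assoc, hAA', hA'A, hBB', hB'B, cA, cA', cB, cB',
      Matrix.mul_one, Matrix.one_mul] at h
    exact h
  have hw4 : (A' * (a2 * (A' * (b1 * (B' * (A)))))).trace = (A' * (b1 * (B' * (a2)))).trace := by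
    have h := Matrix.trace_mul_comm (A' * (a2)) (A' * (b1 * (B' * (A))))
    simp only [Matrix.mul_assoc, hAA', hA'A, hBB', hB'B, cA, cA', cB, cB',
      Matrix.mul_one, Matrix.one_mul] at h
    exact h
  have hw5 : (A' * (a1 * (A' * (B' * (A' * (b2 * (B' * (A * (B * (A)))))))))).trace = (A * (B * (a1 * (A' * (B' * (A' * (b2 * (B')))))))).trace := by
    have h := Matrix.trace_mul_comm (A' * (a1 * (A' * (B' * (A' * (b2 * (B'))))))) (A * (B * (A)))
    simp only [Matrix.mul_assoc, hAA', hA'A, hBB', hB'B, cA, cA', cB, cB',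
      Matrix.mul_one, Matrix.one_mul] at h
    exact h
  have hw6 : (B' * (b1 * (B' * (A' * (a2 * (B)))))).trace = (A' * (a2 * (b1 * (B')))).trace := by
    have h := Matrix.trace_mul_comm (B' * (b1 * (B'))) (A' * (a2 * (B)))
    simp only [Matrix.mul_assoc, hAA', hA'A, hBB', hB'B, cA, cA', cB, cB',
      Matrix.mul_one, Matrix.one_mul] at h
    exact h
  have hw7 : (B' * (A' * (a2 * (b1)))).trace = (A' * (a2 * (b1 * (B')))).trace := by
    have h := Matrix.trace_mul_comm (B') (A' * (a2 * (b1)))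
    simp only [Matrix.mul_assoc, hAA', hA'A, hBB', hB'B, cA, cA', cB, cB',
      Matrix.mul_one, Matrix.one_mul] at h
    exact h
  have hw8 : (A' * (B' * (b1 * (B' * (A' * (a2 * (B * (A)))))))).trace = (A' * (a2 * (b1 * (B')))).trace := by
    have h := Matrix.trace_mul_comm (A' * (B' * (b1 * (B')))) (A' * (a2 * (B * (A))))
    simp only [Matrix.mul_assoc, hAA', hA'A, hBB', hB'B, cA, cA', cB, cB',
      Matrix.mul_one, Matrix.one_mul] at h
    exact h
  have hw9 : (A' * (B' * (b1 * (B' * (A' * (b2 * (B' * (A * (B * (A)))))))))).trace = (A * (b1 * (B' * (A' * (b2 * (B')))))).trace := by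
    have h := Matrix.trace_mul_comm (A' * (B' * (b1 * (B' * (A' * (b2 * (B'))))))) (A * (B * (A)))
    simp only [Matrix.mul_assoc, hAA', hA'A, hBB', hB'B, cA, cA', cB, cB',
      Matrix.mul_one, Matrix.one_mul] at h
    exact h
  have hw10 : (B' * (A' * (b2 * (B' * (A * (b1)))))).trace = (A * (b1 * (B' * (A' * (b2 * (B')))))).trace := by
    have h := Matrix.trace_mul_comm (B' * (A' * (b2 * (B')))) (A * (b1))
    simp only [Matrix.mul_assoc, hAA', hA'A, hBB', hB'B, cA, cA', cB, cB',
      Matrix.mul_one, Matrix.one_mul] at h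
    exact h
  have hw11 : (A' * (a1 * (A' * (B' * (A' * (a2 * (B * (A)))))))).trace = (A' * (B' * (A' * (a2 * (B * (a1)))))).trace := by
    have h := Matrix.trace_mul_comm (A' * (a1)) (A' * (B' * (A' * (a2 * (B * (A))))))
    simp only [Matrix.mul_assoc, hAA', hA'A, hBB', hB'B, cA, cA', cB, cB',
      Matrix.mul_one, Matrix.one_mul] at h
    exact h
  have hw12 : (A' * (a2 * (A' * (a1)))).trace = (A' * (a1 * (A' * (a2)))).trace := by
    have h := Matrix.trace_mul_comm (A' * (a2)) (A' * (a1))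
    simp only [Matrix.mul_assoc, hAA', hA'A, hBB', hB'B, cA, cA', cB, cB',
      Matrix.mul_one, Matrix.one_mul] at h
    exact h
  have hw13 : (B' * (A' * (a2 * (A' * (a1 * (B)))))).trace = (A' * (a1 * (A' * (a2)))).trace := by
    have h := Matrix.trace_mul_comm (B' * (A' * (a2))) (A' * (a1 * (B)))
    simp only [Matrix.mul_assoc, hAA', hA'A, hBB', hB'B, cA, cA', cB, cB',
      Matrix.mul_one, Matrix.one_mul] at h
    exact h
  have hw14 : (B' * (A' * (a1 * (A' * (a2 * (B)))))).trace = (A' * (a1 * (A' * (a2)))).trace := by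
    have h := Matrix.trace_mul_comm (B') (A' * (a1 * (A' * (a2 * (B)))))
    simp only [Matrix.mul_assoc, hAA', hA'A, hBB', hB'B, cA, cA', cB, cB',
      Matrix.mul_one, Matrix.one_mul] at h
    exact h
  have hw15 : (A' * (B' * (b2 * (B' * (b1 * (A)))))).trace = (B' * (b1 * (B' * (b2)))).trace := by
    have h := Matrix.trace_mul_comm (A' * (B' * (b2))) (B' * (b1 * (A)))
    simp only [Matrix.mul_assoc, hAA', hA'A, hBB', hB'B, cA, cA', cB, cB',
      Matrix.mul_one, Matrix.one_mul] at h
    exact h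
  have hw16 : (A' * (B' * (b1 * (B' * (b2 * (A)))))).trace = (B' * (b1 * (B' * (b2)))).trace := by
    have h := Matrix.trace_mul_comm (A') (B' * (b1 * (B' * (b2 * (A)))))
    simp only [Matrix.mul_assoc, hAA', hA'A, hBB', hB'B, cA, cA', cB, cB',
      Matrix.mul_one, Matrix.one_mul] at h
    exact h
  have hw17 : (B' * (b2 * (B' * (b1)))).trace = (B' * (b1 * (B' * (b2)))).trace := by
    have h := Matrix.trace_mul_comm (B' * (b2)) (B' * (b1))
    simp only [Matrix.mul_assoc, hAA', hA'A, hBB', hB'B, cA, cA', cB, cB',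
      Matrix.mul_one, Matrix.one_mul] at h
    exact h
  have hw18 : (A' * (B' * (b2 * (B' * (A' * (a1 * (B * (A)))))))).trace = (A' * (a1 * (b2 * (B')))).trace := by
    have h := Matrix.trace_mul_comm (A' * (B' * (b2 * (B')))) (A' * (a1 * (B * (A))))
    simp only [Matrix.mul_assoc, hAA', hA'A, hBB', hB'B, cA, cA', cB, cB',
      Matrix.mul_one, Matrix.one_mul] at h
    exact h
  have hw19 : (B' * (A' * (a1 * (b2)))).trace = (A' * (a1 * (b2 * (B')))).trace := by
    have h := Matrix.trace_mul_comm (B') (A' * (a1 * (b2)))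
    simp only [Matrix.mul_assoc, hAA', hA'A, hBB', hB'B, cA, cA', cB, cB',
      Matrix.mul_one, Matrix.one_mul] at h
    exact h
  have hw20 : (B' * (b2 * (B' * (A' * (a1 * (B)))))).trace = (A' * (a1 * (b2 * (B')))).trace := by
    have h := Matrix.trace_mul_comm (B' * (b2 * (B'))) (A' * (a1 * (B)))
    simp only [Matrix.mul_assoc, hAA', hA'A, hBB', hB'B, cA, cA', cB, cB',
      Matrix.mul_one, Matrix.one_mul] at h
    exact h
  have hw21 : (A' * (a2 * (A' * (B' * (A' * (B * (a1 * (A' * (B' * (A * (B * (A)))))))))))).trace = (A * (B * (a2 * (A' * (B' * (A' * (B * (a1 * (A' * (B')))))))))).trace := by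
    have h := Matrix.trace_mul_comm (A' * (a2 * (A' * (B' * (A' * (B * (a1 * (A' * (B'))))))))) (A * (B * (A)))
    simp only [Matrix.mul_assoc, hAA', hA'A, hBB', hB'B, cA, cA', cB, cB',
      Matrix.mul_one, Matrix.one_mul] at h
    exact h
  have hw22 : (A' * (a2 * (A' * (B * (a1 * (A' * (B' * (A)))))))).trace = (A' * (B * (a1 * (A' * (B' * (a2)))))).trace := by
    have h := Matrix.trace_mul_comm (A' * (a2)) (A' * (B * (a1 * (A' * (B' * (A))))))
    simp only [Matrix.mul_assoc, hAA', hA'A, hBB', hB'B, cA, cA', cB, cB',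
      Matrix.mul_one, Matrix.one_mul] at h
    exact h
  have hw23 : (B' * (A' * (B * (a1 * (A' * (B' * (a2 * (B)))))))).trace = (A' * (B * (a1 * (A' * (B' * (a2)))))).trace := by
    have h := Matrix.trace_mul_comm (B') (A' * (B * (a1 * (A' * (B' * (a2 * (B)))))))
    simp only [Matrix.mul_assoc, hAA', hA'A, hBB', hB'B, cA, cA', cB, cB',
      Matrix.mul_one, Matrix.one_mul] at h
    exact h
  have hw24 : (A' * (a1 * (A' * (b2 * (B' * (A)))))).trace = (A' * (b2 * (B' * (a1)))).trace := by
    have h := Matrix.trace_mul_comm (A' * (a1)) (A' * (b2 * (B' * (A))))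
    simp only [Matrix.mul_assoc, hAA', hA'A, hBB', hB'B, cA, cA', cB, cB',
      Matrix.mul_one, Matrix.one_mul] at h
    exact h
  have hw25 : (B' * (A' * (b2 * (B' * (a1 * (B)))))).trace = (A' * (b2 * (B' * (a1)))).trace := by
    have h := Matrix.trace_mul_comm (B') (A' * (b2 * (B' * (a1 * (B)))))
    simp only [Matrix.mul_assoc, hAA', hA'A, hBB', hB'B, cA, cA', cB, cB',
      Matrix.mul_one, Matrix.one_mul] at h
    exact h
  have hw26 : (A' * (B' * (b2 * (B' * (A' * (B * (a1 * (A' * (B' * (A * (B * (A)))))))))))).trace = (A * (b2 * (B' * (A' * (B * (a1 * (A' * (B')))))))).trace := by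
    have h := Matrix.trace_mul_comm (A' * (B' * (b2 * (B' * (A' * (B * (a1 * (A' * (B'))))))))) (A * (B * (A)))
    simp only [Matrix.mul_assoc, hAA', hA'A, hBB', hB'B, cA, cA', cB, cB',
      Matrix.mul_one, Matrix.one_mul] at h
    exact h
  have hw27 : (B' * (A' * (B * (a1 * (A' * (B' * (A * (b2)))))))).trace = (A * (b2 * (B' * (A' * (B * (a1 * (A' * (B')))))))).trace := by
    have h := Matrix.trace_mul_comm (B' * (A' * (B * (a1 * (A' * (B')))))) (A * (b2))
    simp only [Matrix.mul_assoc, hAA', hA'A, hBB', hB'B, cA, cA', cB, cB',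
      Matrix.mul_one, Matrix.one_mul] at h
    exact h
  have hw28 : (A' * (a1 * (A' * (B * (a2 * (A' * (B' * (A)))))))).trace = (A' * (B * (a2 * (A' * (B' * (a1)))))).trace := by
    have h := Matrix.trace_mul_comm (A' * (a1)) (A' * (B * (a2 * (A' * (B' * (A))))))
    simp only [Matrix.mul_assoc, hAA', hA'A, hBB', hB'B, cA, cA', cB, cB',
      Matrix.mul_one, Matrix.one_mul] at h
    exact h
  have hw29 : (B' * (A' * (B * (a2 * (A' * (B' * (a1 * (B)))))))).trace = (A' * (B * (a2 * (A' * (B' * (a1)))))).trace := by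
    have h := Matrix.trace_mul_comm (B') (A' * (B * (a2 * (A' * (B' * (a1 * (B)))))))
    simp only [Matrix.mul_assoc, hAA', hA'A, hBB', hB'B, cA, cA', cB, cB',
      Matrix.mul_one, Matrix.one_mul] at h
    exact h
  have hw30 : (A' * (a1 * (A' * (B' * (A' * (B * (a2 * (A' * (B' * (A * (B * (A)))))))))))).trace = (A * (B * (a1 * (A' * (B' * (A' * (B * (a2 * (A' * (B')))))))))).trace := by
    have h := Matrix.trace_mul_comm (A' * (a1 * (A' * (B' * (A' * (B * (a2 * (A' * (B'))))))))) (A * (B * (A)))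
    simp only [Matrix.mul_assoc, hAA', hA'A, hBB', hB'B, cA, cA', cB, cB',
      Matrix.mul_one, Matrix.one_mul] at h
    exact h
  have hw31 : (A' * (a2 * (A' * (B' * (b1 * (A)))))).trace = (A' * (B' * (b1 * (a2)))).trace := by
    have h := Matrix.trace_mul_comm (A' * (a2)) (A' * (B' * (b1 * (A))))
    simp only [Matrix.mul_assoc, hAA', hA'A, hBB', hB'B, cA, cA', cB, cB',
      Matrix.mul_one, Matrix.one_mul] at h
    exact h
  have hw32 : (B' * (b1 * (a2 * (A')))).trace = (A' * (B' * (b1 * (a2)))).trace := by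
    have h := Matrix.trace_mul_comm (B' * (b1 * (a2))) (A')
    simp only [Matrix.mul_assoc, hAA', hA'A, hBB', hB'B, cA, cA', cB, cB',
      Matrix.mul_one, Matrix.one_mul] at h
    exact h
  have hw33 : (B' * (A' * (b1 * (B' * (A * (b2)))))).trace = (A * (b2 * (B' * (A' * (b1 * (B')))))).trace := by
    have h := Matrix.trace_mul_comm (B' * (A' * (b1 * (B')))) (A * (b2))
    simp only [Matrix.mul_assoc, hAA', hA'A, hBB', hB'B, cA, cA', cB, cB',
      Matrix.mul_one, Matrix.one_mul] at h
    exact h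
  have hw34 : (A' * (B' * (b2 * (B' * (A' * (b1 * (B' * (A * (B * (A)))))))))).trace = (A * (b2 * (B' * (A' * (b1 * (B')))))).trace := by
    have h := Matrix.trace_mul_comm (A' * (B' * (b2 * (B' * (A' * (b1 * (B'))))))) (A * (B * (A)))
    simp only [Matrix.mul_assoc, hAA', hA'A, hBB', hB'B, cA, cA', cB, cB',
      Matrix.mul_one, Matrix.one_mul] at h
    exact h
  have hw35 : (A' * (B' * (b1 * (B' * (A' * (B * (a2 * (A' * (B' * (A * (B * (A)))))))))))).trace = (A * (b1 * (B' * (A' * (B * (a2 * (A' * (B')))))))).trace := by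
    have h := Matrix.trace_mul_comm (A' * (B' * (b1 * (B' * (A' * (B * (a2 * (A' * (B'))))))))) (A * (B * (A)))
    simp only [Matrix.mul_assoc, hAA', hA'A, hBB', hB'B, cA, cA', cB, cB',
      Matrix.mul_one, Matrix.one_mul] at h
    exact h
  have hw36 : (B' * (A' * (B * (a2 * (A' * (B' * (A * (b1)))))))).trace = (A * (b1 * (B' * (A' * (B * (a2 * (A' * (B')))))))).trace := by
    have h := Matrix.trace_mul_comm (B' * (A' * (B * (a2 * (A' * (B')))))) (A * (b1))
    simp only [Matrix.mul_assoc, hAA', hA'A, hBB', hB'B, cA, cA', cB, cB',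
      Matrix.mul_one, Matrix.one_mul] at h
    exact h
  have hw37 : (A' * (a2 * (A' * (B' * (A' * (a1 * (B * (A)))))))).trace = (A' * (B' * (A' * (a1 * (B * (a2)))))).trace := by
    have h := Matrix.trace_mul_comm (A' * (a2)) (A' * (B' * (A' * (a1 * (B * (A))))))
    simp only [Matrix.mul_assoc, hAA', hA'A, hBB', hB'B, cA, cA', cB, cB',
      Matrix.mul_one, Matrix.one_mul] at h
    exact h
  have hw38 : (A' * (a2 * (A' * (B' * (A' * (b1 * (B' * (A * (B * (A)))))))))).trace = (A * (B * (a2 * (A' * (B' * (A' * (b1 * (B')))))))).trace := by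
    have h := Matrix.trace_mul_comm (A' * (a2 * (A' * (B' * (A' * (b1 * (B'))))))) (A * (B * (A)))
    simp only [Matrix.mul_assoc, hAA', hA'A, hBB', hB'B, cA, cA', cB, cB',
      Matrix.mul_one, Matrix.one_mul] at h
    exact h
  rw [hw1, hw2, hw3, hw4, hw5, hw6, hw7, hw8, hw9, hw10, hw11, hw12, hw13, hw14, hw15, hw16, hw17, hw18, hw19, hw20, hw21, hw22, hw23, hw24, hw25, hw26, hw27, hw28, hw29, hw30, hw31, hw32, hw33, hw34, hw35, hw36, hw37, hw38]
  ring

/-- The computation (ct2)–(ct4a) of the paper: the sum of the contributions `I₁ + I₂` of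
the `a`- and `b`-segments of the loop `aba⁻¹b⁻¹` equals the two-form `χ(A, B)` of
formula (x), with `J = B⁻¹A⁻¹BA`. -/
theorem stmt_13 (r : ℕ) (hr : 1 ≤ r)
    (U : Set (ℝ × ℝ)) (hU : IsOpen U)
    (A B : ℝ × ℝ → Matrix (Fin r) (Fin r) ℂ)
    (hA : ∀ i j, DifferentiableOn ℝ (fun u => A u i j) U)
    (hB : ∀ i j, DifferentiableOn ℝ (fun u => B u i j) U)
    (hAu : ∀ u ∈ U, IsUnit (A u)) (hBu : ∀ u ∈ U, IsUnit (B u)) :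
    ∀ u ∈ U,
      -(wedgeTr
          ((A u)⁻¹ * mpd1 A u)
          ((A u)⁻¹ * mpd2 A u)
          (mpd1 (fun v => B v * commJ A B v) u * ((commJ A B u)⁻¹ * (B u)⁻¹))
          (mpd2 (fun v => B v * commJ A B v) u * ((commJ A B u)⁻¹ * (B u)⁻¹)))
      - (wedgeTr
          ((A u)⁻¹ * (B u)⁻¹ * mpd1 (fun v => B v * A v) u - (A u)⁻¹ * mpd1 A u)
          ((A u)⁻¹ * (B u)⁻¹ * mpd2 (fun v => B v * A v) u - (A u)⁻¹ * mpd2 A u)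
          (mpd1 (fun v => (A v)⁻¹ * commJ A B v) u * ((commJ A B u)⁻¹ * A u))
          (mpd2 (fun v => (A v)⁻¹ * commJ A B v) u * ((commJ A B u)⁻¹ * A u)))
      =
      wedgeTr
        ((B u)⁻¹ * mpd1 B u) ((B u)⁻¹ * mpd2 B u)
        (mpd1 A u * (A u)⁻¹) (mpd2 A u * (A u)⁻¹)
      - wedgeTr
          ((A u)⁻¹ * mpd1 A u) ((A u)⁻¹ * mpd2 A u)
          (mpd1 B u * (B u)⁻¹) (mpd2 B u * (B u)⁻¹)
      + wedgeTr
          (mpd1 (commJ A B) u * (commJ A B u)⁻¹)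
          (mpd2 (commJ A B) u * (commJ A B u)⁻¹)
          ((B u)⁻¹ * (A u)⁻¹ * mpd1 (fun v => A v * B v) u)
          ((B u)⁻¹ * (A u)⁻¹ * mpd2 (fun v => A v * B v) u) := by
  intro u hu
  have hUu : U ∈ nhds u := hU.mem_nhds hu
  have hdA : IsUnit (A u).det := (Matrix.isUnit_iff_isUnit_det _).mp (hAu u hu)
  have hdB : IsUnit (B u).det := (Matrix.isUnit_iff_isUnit_det _).mp (hBu u hu)
  have hA1 : EDiff (fun s => A (s, u.2)) u.1 := fun i j =>
    DifferentiableAt.comp u.1 ((hA i j).differentiableAt hUu)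
      (differentiableAt_id.prodMk (differentiableAt_const _))
  have hB1 : EDiff (fun s => B (s, u.2)) u.1 := fun i j =>
    DifferentiableAt.comp u.1 ((hB i j).differentiableAt hUu)
      (differentiableAt_id.prodMk (differentiableAt_const _))
  have hA2 : EDiff (fun s => A (u.1, s)) u.2 := fun i j =>
    DifferentiableAt.comp u.2 ((hA i j).differentiableAt hUu)
      ((differentiableAt_const _).prodMk differentiableAt_id)
  have hB2 : EDiff (fun s => B (u.1, s)) u.2 := fun i j =>
    DifferentiableAt.comp u.2 ((hB i j).differentiableAt hUu)
      ((differentiableAt_const _).prodMk differentiableAt_id)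
  have hmem1 : ∀ᶠ s in nhds u.1, (s, u.2) ∈ U :=
    ((continuous_id.prodMk continuous_const).continuousAt).preimage_mem_nhds hUu
  have hmem2 : ∀ᶠ s in nhds u.2, (u.1, s) ∈ U :=
    ((continuous_const.prodMk continuous_id).continuousAt).preimage_mem_nhds hUu
  have hu1A : ∀ᶠ s in nhds u.1, IsUnit (A (s, u.2)) := hmem1.mono fun s hs => hAu _ hs
  have hu1B : ∀ᶠ s in nhds u.1, IsUnit (B (s, u.2)) := hmem1.mono fun s hs => hBu _ hs
  have hu2A : ∀ᶠ s in nhds u.2, IsUnit (A (u.1, s)) := hmem2.mono fun s hs => hAu _ hs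
  have hu2B : ∀ᶠ s in nhds u.2, IsUnit (B (u.1, s)) := hmem2.mono fun s hs => hBu _ hs
  have hp1 := md_package (fun s => A (s, u.2)) (fun s => B (s, u.2)) u.1 hA1 hB1 hu1A hu1B
  have hp2 := md_package (fun s => A (u.1, s)) (fun s => B (u.1, s)) u.2 hA2 hB2 hu2A hu2B
  have eJ1 : mpd1 (commJ A B) u = -((B u)⁻¹ * mpd1 B u * (B u)⁻¹ * (A u)⁻¹ * B u * A u) - (B u)⁻¹ * (A u)⁻¹ * mpd1 A u * (A u)⁻¹ * B u * A u + (B u)⁻¹ * (A u)⁻¹ * mpd1 B u * A u + (B u)⁻¹ * (A u)⁻¹ * B u * mpd1 A u := hp1.1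
  have eBJ1 : mpd1 (fun v => B v * commJ A B v) u = mpd1 B u * ((B u)⁻¹ * (A u)⁻¹ * B u * A u) + B u * (-((B u)⁻¹ * mpd1 B u * (B u)⁻¹ * (A u)⁻¹ * B u * A u) - (B u)⁻¹ * (A u)⁻¹ * mpd1 A u * (A u)⁻¹ * B u * A u + (B u)⁻¹ * (A u)⁻¹ * mpd1 B u * A u + (B u)⁻¹ * (A u)⁻¹ * B u * mpd1 A u) := hp1.2.1
  have eAiJ1 : mpd1 (fun v => (A v)⁻¹ * commJ A B v) u = -((A u)⁻¹ * mpd1 A u * (A u)⁻¹) * ((B u)⁻¹ * (A u)⁻¹ * B u * A u) + (A u)⁻¹ * (-((B u)⁻¹ * mpd1 B u * (B u)⁻¹ * (A u)⁻¹ * B u * A u) - (B u)⁻¹ * (A u)⁻¹ * mpd1 A u * (A u)⁻¹ * B u * A u + (B u)⁻¹ * (A u)⁻¹ * mpd1 B u * A u + (B u)⁻¹ * (A u)⁻¹ * B u * mpd1 A u) := hp1.2.2.1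
  have eBA1 : mpd1 (fun v => B v * A v) u = mpd1 B u * A u + B u * mpd1 A u := hp1.2.2.2.1
  have eAB1 : mpd1 (fun v => A v * B v) u = mpd1 A u * B u + A u * mpd1 B u := hp1.2.2.2.2
  have eJ2 : mpd2 (commJ A B) u = -((B u)⁻¹ * mpd2 B u * (B u)⁻¹ * (A u)⁻¹ * B u * A u) - (B u)⁻¹ * (A u)⁻¹ * mpd2 A u * (A u)⁻¹ * B u * A u + (B u)⁻¹ * (A u)⁻¹ * mpd2 B u * A u + (B u)⁻¹ * (A u)⁻¹ * B u * mpd2 A u := hp2.1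
  have eBJ2 : mpd2 (fun v => B v * commJ A B v) u = mpd2 B u * ((B u)⁻¹ * (A u)⁻¹ * B u * A u) + B u * (-((B u)⁻¹ * mpd2 B u * (B u)⁻¹ * (A u)⁻¹ * B u * A u) - (B u)⁻¹ * (A u)⁻¹ * mpd2 A u * (A u)⁻¹ * B u * A u + (B u)⁻¹ * (A u)⁻¹ * mpd2 B u * A u + (B u)⁻¹ * (A u)⁻¹ * B u * mpd2 A u) := hp2.2.1
  have eAiJ2 : mpd2 (fun v => (A v)⁻¹ * commJ A B v) u = -((A u)⁻¹ * mpd2 A u * (A u)⁻¹) * ((B u)⁻¹ * (A u)⁻¹ * B u * A u) + (A u)⁻¹ * (-((B u)⁻¹ * mpd2 B u * (B u)⁻¹ * (A u)⁻¹ * B u * A u) - (B u)⁻¹ * (A u)⁻¹ * mpd2 A u * (A u)⁻¹ * B u * A u + (B u)⁻¹ * (A u)⁻¹ * mpd2 B u * A u + (B u)⁻¹ * (A u)⁻¹ * B u * mpd2 A u) := hp2.2.2.1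
  have eBA2 : mpd2 (fun v => B v * A v) u = mpd2 B u * A u + B u * mpd2 A u := hp2.2.2.2.1
  have eAB2 : mpd2 (fun v => A v * B v) u = mpd2 A u * B u + A u * mpd2 B u := hp2.2.2.2.2
  have hKinv : (commJ A B u)⁻¹ = (A u)⁻¹ * ((B u)⁻¹ * (A u * B u)) := by
    have hc : commJ A B u = (B u)⁻¹ * (A u)⁻¹ * B u * A u := rfl
    rw [hc, Matrix.mul_inv_rev, Matrix.mul_inv_rev, Matrix.mul_inv_rev,
      Matrix.nonsing_inv_nonsing_inv _ hdA, Matrix.nonsing_inv_nonsing_inv _ hdB]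
  rw [eBJ1, eBJ2, eAiJ1, eAiJ2, eBA1, eBA2, eAB1, eAB2, eJ1, eJ2, hKinv]
  exact core_alg (A u) (B u) (A u)⁻¹ (B u)⁻¹ (mpd1 A u) (mpd2 A u) (mpd1 B u) (mpd2 B u)
    (Matrix.mul_nonsing_inv _ hdA) (Matrix.nonsing_inv_mul _ hdA)
    (Matrix.mul_nonsing_inv _ hdB) (Matrix.nonsing_inv_mul _ hdB)
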